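/- Fix k ≥ 1 and let D_{n,k} = 2k(n−k). Then lim_{n→∞} [ Γ(D_{n,k}/2 + 1) · ∏_{j=1}^{k} Γ(j) / ∏_{i=n−k+1}^{n} Γ(i) ]^{1/D_{n,k}} = √k. Equivalently, (vol G_{k,n}/|B^{D_{n,k}}|)^{1/D_{n,k}} → √k as n → ∞. -/

import Mathlib

open Real Finset Filter

private lemma fact_add_prod (n k : ℕ) :
    ((n + k).factorial : ℝ) = (n.factorial : ℝ) * ∏ t ∈ range k, ((n + t + 1 : ℕ) : ℝ) := by
  induction k with
  | zero => simp
  | succ k ih =>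
    rw [Finset.prod_range_succ, ← mul_assoc, ← ih, ← Nat.add_assoc, Nat.factorial_succ]
    push_cast; ring

private lemma term_tendsto (k t : ℕ) (hk : 1 ≤ k) :
    Tendsto (fun i : ℕ => Real.log ((k * i + t + 1 : ℕ) : ℝ) - Real.log ((i + t + 1 : ℕ) : ℝ))
      atTop (nhds (Real.log k)) := by
  have hkpos : (0 : ℝ) < k := by exact_mod_cast hk
  have h1 : Tendsto (fun i : ℕ => ((i : ℝ) + (t + 1))⁻¹) atTop (nhds 0) := by
    apply Tendsto.comp tendsto_inv_atTop_zero
    exact tendsto_atTop_add_const_right _ _ tendsto_natCast_atTop_atTop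
  have h2 : Tendsto (fun i : ℕ => (k : ℝ) + ((t + 1 : ℝ) - k * (t + 1)) * ((i : ℝ) + (t + 1))⁻¹)
      atTop (nhds ((k : ℝ) + ((t + 1 : ℝ) - k * (t + 1)) * 0)) :=
    tendsto_const_nhds.add (tendsto_const_nhds.mul h1)
  rw [mul_zero, add_zero] at h2
  have h3 : Tendsto (fun i : ℕ => ((k * i + t + 1 : ℕ) : ℝ) / ((i + t + 1 : ℕ) : ℝ)) atTop
      (nhds (k : ℝ)) := by
    apply h2.congr'
    filter_upwards [eventually_ge_atTop 1] with i _
    have hpos : (0 : ℝ) < (i : ℝ) + (t + 1) := by positivity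
    push_cast
    field_simp
    ring
  have h4 := (Real.continuousAt_log (ne_of_gt hkpos)).tendsto.comp h3
  apply h4.congr
  intro i
  have hp1 : (0 : ℝ) < ((k * i + t + 1 : ℕ) : ℝ) := by positivity
  have hp2 : (0 : ℝ) < ((i + t + 1 : ℕ) : ℝ) := by positivity
  simp only [Function.comp]
  rw [Real.log_div (ne_of_gt hp1) (ne_of_gt hp2)]

/-- Asymptotics of the Grassmann volume-to-ball ratio: with `D_{n,k} = 2k(n−k)`,
`[Γ(D_{n,k}/2 + 1) · ∏_{j=1}^{k} Γ(j) / ∏_{i=n−k+1}^{n} Γ(i)]^{1/D_{n,k}} → √k`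
as `n → ∞`. -/
theorem grassmann_volume_ratio_limit (k : ℕ) (hk : 1 ≤ k) :
    Tendsto
      (fun n : ℕ =>
        (Real.Gamma (((2 * k * (n - k) : ℕ) : ℝ) / 2 + 1) *
            (∏ j ∈ Finset.Icc 1 k, Real.Gamma (j : ℝ)) /
          ∏ i ∈ Finset.Icc (n - k + 1) n, Real.Gamma (i : ℝ)) ^
          (1 / ((2 * k * (n - k) : ℕ) : ℝ)))
      atTop (nhds (Real.sqrt k)) := by
  have hkR : (0 : ℝ) < k := by exact_mod_cast hk
  set C : ℝ := ∏ j ∈ Finset.Icc 1 k, Real.Gamma (j : ℝ) with hCdef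
  have hC : 0 < C := by
    apply Finset.prod_pos
    intro j hj
    exact Real.Gamma_pos_of_pos (by exact_mod_cast (Finset.mem_Icc.mp hj).1)
  set P : ℕ → ℝ := fun m => ∏ j ∈ range k, (((m + j).factorial : ℕ) : ℝ) with hPdef
  have hP : ∀ m, 0 < P m := fun m => Finset.prod_pos (fun j _ => by positivity)
  set a : ℕ → ℝ := fun m => ((k * m).factorial : ℝ) * C / P m with hadef
  have ha : ∀ m, 0 < a m := fun m => by
    apply div_pos (mul_pos (by positivity) hC) (hP m)
  -- log a(m+1) - log a m
  have hd : ∀ i : ℕ, Real.log (a (i + 1)) - Real.log (a i)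
      = ∑ t ∈ range k, (Real.log ((k * i + t + 1 : ℕ) : ℝ) - Real.log ((i + t + 1 : ℕ) : ℝ)) := by
    intro i
    have hprod1 : (0:ℝ) < ∏ t ∈ range k, ((k * i + t + 1 : ℕ) : ℝ) :=
      Finset.prod_pos (fun t _ => by positivity)
    have hprod2 : (0:ℝ) < ∏ t ∈ range k, ((i + t + 1 : ℕ) : ℝ) :=
      Finset.prod_pos (fun t _ => by positivity)
    have hfact : ((k * (i + 1)).factorial : ℝ)
        = ((k * i).factorial : ℝ) * ∏ t ∈ range k, ((k * i + t + 1 : ℕ) : ℝ) := by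
      rw [Nat.mul_add, Nat.mul_one]; exact fact_add_prod (k * i) k
    have hPsucc : P (i + 1) = P i * ∏ t ∈ range k, ((i + t + 1 : ℕ) : ℝ) := by
      rw [hPdef, ← Finset.prod_mul_distrib]
      apply Finset.prod_congr rfl
      intro j _
      have : i + 1 + j = (i + j) + 1 := by ring
      rw [this, Nat.factorial_succ]
      push_cast; ring
    have lf : Real.log ((k * (i + 1)).factorial : ℝ)
        = Real.log ((k * i).factorial : ℝ) + ∑ t ∈ range k, Real.log ((k * i + t + 1 : ℕ) : ℝ) := by
      rw [hfact, Real.log_mul (by positivity) (ne_of_gt hprod1),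
        Real.log_prod (fun t _ => by positivity)]
    have lp : Real.log (P (i + 1))
        = Real.log (P i) + ∑ t ∈ range k, Real.log ((i + t + 1 : ℕ) : ℝ) := by
      rw [hPsucc, Real.log_mul (ne_of_gt (hP i)) (ne_of_gt hprod2),
        Real.log_prod (s := range k) (f := fun t => ((i + t + 1 : ℕ) : ℝ)) (fun t _ => by positivity)]
    have l1 : Real.log (a (i + 1)) =
        Real.log ((k * (i+1)).factorial : ℝ) + Real.log C - Real.log (P (i+1)) := by
      rw [hadef]
      rw [Real.log_div (by positivity) (ne_of_gt (hP _)), Real.log_mul (by positivity) (ne_of_gt hC)]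
    have l2 : Real.log (a i) =
        Real.log ((k * i).factorial : ℝ) + Real.log C - Real.log (P i) := by
      rw [hadef]
      rw [Real.log_div (by positivity) (ne_of_gt (hP _)), Real.log_mul (by positivity) (ne_of_gt hC)]
    rw [l1, l2, lf, lp, Finset.sum_sub_distrib]
    ring
  -- limit of d
  have hdlim : Tendsto (fun i : ℕ => Real.log (a (i + 1)) - Real.log (a i)) atTop
      (nhds (k * Real.log k)) := by
    have hsum : (k : ℝ) * Real.log k = ∑ _t ∈ range k, Real.log k := by
      rw [Finset.sum_const, Finset.card_range, nsmul_eq_mul]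
    rw [hsum]
    apply Tendsto.congr (fun i => (hd i).symm)
    exact tendsto_finset_sum _ (fun t _ => term_tendsto k t hk)
  -- Cesaro
  have hces := hdlim.cesaro
  have hlog : Tendsto (fun m : ℕ => Real.log (a m) / m) atTop (nhds (k * Real.log k)) := by
    have h0 : Tendsto (fun m : ℕ => Real.log (a 0) * (m : ℝ)⁻¹) atTop (nhds 0) := by
      have h1 : Tendsto (fun m : ℕ => ((m : ℝ))⁻¹) atTop (nhds 0) :=
        tendsto_inv_atTop_zero.comp tendsto_natCast_atTop_atTop
      simpa using tendsto_const_nhds.mul h1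
    have h2 := hces.add h0
    rw [add_zero] at h2
    apply h2.congr'
    filter_upwards [eventually_ge_atTop 1] with m hm
    rw [Finset.sum_range_sub (fun i => Real.log (a i)) m]
    ring
  -- scale
  have hhalf : Tendsto (fun m : ℕ => Real.log (a m) * (1 / ((2 * k * m : ℕ) : ℝ))) atTop
      (nhds (Real.log k / 2)) := by
    have h2 : Tendsto (fun m : ℕ => (Real.log (a m) / m) * (1 / (2 * k))) atTop
        (nhds ((k * Real.log k) * (1 / (2 * k)))) := hlog.mul tendsto_const_nhds
    have heq : (k : ℝ) * Real.log k * (1 / (2 * k)) = Real.log k / 2 := by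
      field_simp
    rw [heq] at h2
    apply h2.congr
    intro m
    push_cast
    ring
  -- exponentiate
  have hG : Tendsto (fun m : ℕ => a m ^ (1 / ((2 * k * m : ℕ) : ℝ))) atTop
      (nhds (Real.sqrt k)) := by
    have hexp := (Real.continuous_exp.tendsto _).comp hhalf
    have hs : Real.exp (Real.log k / 2) = Real.sqrt k := by
      rw [Real.sqrt_eq_rpow, Real.rpow_def_of_pos hkR]
      ring_nf
    rw [hs] at hexp
    apply hexp.congr
    intro m
    simp only [Function.comp]
    rw [Real.rpow_def_of_pos (ha m)]
  -- relate original function to a ∘ (· - k)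
  have key : Tendsto ((fun m : ℕ => a m ^ (1 / ((2 * k * m : ℕ) : ℝ))) ∘ (fun n => n - k))
      atTop (nhds (Real.sqrt k)) := hG.comp (tendsto_sub_atTop_nat k)
  apply key.congr'
  filter_upwards [eventually_ge_atTop k] with n hn
  obtain ⟨m, rfl⟩ : ∃ m, n = m + k := ⟨n - k, by omega⟩
  simp only [Function.comp, Nat.add_sub_cancel]
  congr 1
  have h1 : Real.Gamma (((2 * k * m : ℕ) : ℝ) / 2 + 1) = ((k * m).factorial : ℝ) := by
    have hc : ((2 * k * m : ℕ) : ℝ) / 2 + 1 = ((k * m : ℕ) : ℝ) + 1 := by push_cast; ring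
    rw [hc, Real.Gamma_nat_eq_factorial]
  have h2 : ∏ i ∈ Finset.Icc (m + 1) (m + k), Real.Gamma (i : ℝ) = P m := by
    rw [hPdef]
    rw [← Finset.Ico_add_one_right_eq_Icc, Finset.prod_Ico_eq_prod_range]
    have hcard : m + k + 1 - (m + 1) = k := by omega
    rw [hcard]
    apply Finset.prod_congr rfl
    intro j _
    have hc : ((m + 1 + j : ℕ) : ℝ) = ((m + j : ℕ) : ℝ) + 1 := by push_cast; ring
    rw [hc, Real.Gamma_nat_eq_factorial]
  rw [h1, h2, hadef]
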